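/- In the ETH reduction program P_φ, in any sequentially consistent interleaving with 0 preemptions, for each variable x_i at most one of the two assignment threads S_i^0, S_i^1 appears before the final thread S_f. -/

import Mathlib

/-- Memory events: reads and writes of natural-number values to variables of type `V`. -/
inductive Event (V : Type) where
  | read  (x : V) (d : ℕ)
  | write (x : V) (d : ℕ)
deriving DecidableEq

variable {V ι : Type}

/-- A sequence of events is sequentially consistent (SC): every read `r(x,d)` has a
preceding write `w(x,d)` with no write of a different value to `x` in between. -/
def SC (σ : List (Event V)) : Prop :=
  ∀ (p : ℕ) x d, σ[p]? = some (Event.read x d) →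
    ∃ q : ℕ, q < p ∧ σ[q]? = some (Event.write x d) ∧
      ∀ r, q < r → r < p → ∀ d', d' ≠ d → σ[r]? ≠ some (Event.write x d')

/-- `σ` is an interleaving of the given threads: its restriction to each
thread identifier equals that thread's event sequence. -/
def IsInterleaving [DecidableEq ι] (threads : ι → List (Event V)) (σ : List (ι × Event V)) : Prop :=
  ∀ i, σ.filterMap (fun a => if a.1 = i then some a.2 else none) = threads i

/-- A preemption occurs at position `j`: the events at `j` and `j+1` are from
different threads and the event at `j` is not the last event of its thread. -/
def PreemptionAt (σ : List (ι × Event V)) (j : ℕ) : Prop :=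
  ∃ a b, σ[j]? = some a ∧ σ[j + 1]? = some b ∧ a.1 ≠ b.1 ∧
    ∃ r c, j < r ∧ σ[r]? = some c ∧ c.1 = a.1

open Classical in
/-- The number of preemption positions of `σ`. -/
noncomputable def numPreemptions (σ : List (ι × Event V)) : ℕ :=
  ((Finset.range σ.length).filter fun j => PreemptionAt σ j).card

open Classical in
/-- The number of context switches of `σ` (adjacent events of different threads). -/
noncomputable def numSwitches (σ : List (ι × Event V)) : ℕ :=
  ((Finset.range σ.length).filter fun j =>
    ∃ a b, σ[j]? = some a ∧ σ[j + 1]? = some b ∧ a.1 ≠ b.1).card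

/-- The (increasing) list of positions of `σ` carrying events of thread `i`. -/
def threadPositions [DecidableEq ι] (σ : List (ι × Event V)) (i : ι) : List ℕ :=
  (List.range σ.length).filter fun p => decide ((σ[p]?).map Prod.fst = some i)

/-- The position in `σ` of the `j`-th event of thread `i`. -/
def posOf [DecidableEq ι] (σ : List (ι × Event V)) (i : ι) (j : ℕ) : ℕ :=
  (threadPositions σ i).getD j 0

/-- All events of thread `t` occur before all events of thread `t'` in `σ`. -/
def ThreadBefore [DecidableEq ι] (σ : List (ι × Event V)) (t t' : ι) : Prop :=
  ∀ p ∈ threadPositions σ t, ∀ q ∈ threadPositions σ t', p < q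

/-- The event is a write to variable `x`. -/
def writesTo (x : V) : Event V → Prop
  | Event.write y _ => y = x
  | _ => False

/-- A 1-writer program: for each variable, a single thread performs all writes to it. -/
def OneWriter (threads : ι → List (Event V)) : Prop :=
  ∀ x i i', (∃ e ∈ threads i, writesTo x e) → (∃ e ∈ threads i', writesTo x e) → i = i'

/-- The events of thread `i` from its index `s` onwards appear contiguously in `σ`. -/
def ContiguousFrom [DecidableEq ι] (σ : List (ι × Event V)) (i : ι) (s : ℕ) : Prop :=
  ∀ j, s ≤ j → j + 1 < (threadPositions σ i).length → posOf σ i (j + 1) = posOf σ i j + 1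

/-- Conflict-graph edge `tr → tw` between outer blocks (suffixes of the threads
starting at indices `s tr`, `s tw`): the last write to some variable `x` in the
outer block of `tw` conflicts with a read of `x` in the outer block of `tr`. -/
def ConflictEdge [DecidableEq ι] (threads : ι → List (Event V)) (s : ι → ℕ) (tr tw : ι) : Prop :=
  tr ≠ tw ∧ ∃ x d d' jr jw, d ≠ d' ∧
    s tr ≤ jr ∧ (threads tr)[jr]? = some (Event.read x d) ∧
    s tw ≤ jw ∧ (threads tw)[jw]? = some (Event.write x d') ∧
    ∀ j d'', jw < j → (threads tw)[j]? ≠ some (Event.write x d'')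

/-- Splitting a list into contiguous blocks immediately after each position in `cut`. -/
def splitAtCuts {α : Type} (l : List α) (cut : Finset ℕ) : List (List α) :=
  let cs := cut.sort (· ≤ ·)
  ((0 :: cs.map (· + 1)).zip (cs.map (· + 1) ++ [l.length])).map fun p => (l.take p.2).drop p.1


/-- Variables of the ETH 3-writer reduction: `v i` per program variable, `c j` per
clause, and the distinguished variable `x`. -/
inductive PVar (K m : ℕ) where
  | v (i : Fin K)
  | c (j : Fin m)
  | x
deriving DecidableEq

/-- Thread identifiers of the ETH 3-writer reduction. -/
inductive TId (K : ℕ) where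
  | assign (i : Fin K) (b : Bool)
  | lit (i : Fin K) (b : Bool)
  | final
  | helper (i : Fin K) (b : Bool)
deriving DecidableEq

/-- Boolean as a value. -/
def bval (b : Bool) : ℕ := if b then 1 else 0

/-- The threads of the program `P_φ` of the ETH 3-writer reduction, for a 3-CNF given
by `clauses : Fin m → Fin 3 → Fin K × Bool` (literal = variable index and polarity). -/
def phiThreads {K m : ℕ} (clauses : Fin m → Fin 3 → Fin K × Bool) :
    TId K → List (Event (PVar K m))
  | TId.assign i b => [Event.write (PVar.v i) (bval b)]
  | TId.lit i b => (List.finRange m).filterMap fun j =>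
      if ∃ t : Fin 3, clauses j t = (i, b) then some (Event.write (PVar.c j) 1) else none
  | TId.final => ((List.finRange m).map fun j => Event.read (PVar.c j) 1)
      ++ [Event.write PVar.x 1]
  | TId.helper i b => [Event.read PVar.x 1, Event.read (PVar.v i) (bval b)]


lemma fm_head {α β : Type*} (f : α → Option β) :
    ∀ (l : List α) (e : β) (rest : List β), l.filterMap f = e :: rest →
      ∃ (p : ℕ) (a : α), l[p]? = some a ∧ f a = some e := by
  intro l
  induction l with
  | nil => intro e rest h; simp at h
  | cons a tl ih =>
    intro e rest h
    rw [List.filterMap_cons] at h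
    cases hfa : f a with
    | none =>
      rw [hfa] at h
      obtain ⟨p, b, hb, hfb⟩ := ih e rest h
      exact ⟨p + 1, b, hb, hfb⟩
    | some v =>
      rw [hfa] at h
      have h' : v :: tl.filterMap f = e :: rest := h
      injection h' with hv _
      exact ⟨0, a, rfl, by rw [hfa, hv]⟩

lemma fm_pair {α β : Type*} (f : α → Option β) :
    ∀ (l : List α) (e1 e2 : β), l.filterMap f = [e1, e2] →
      ∃ (p q : ℕ) (a b : α), p < q ∧ l[p]? = some a ∧ f a = some e1 ∧
        l[q]? = some b ∧ f b = some e2 := by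
  intro l
  induction l with
  | nil => intro e1 e2 h; simp at h
  | cons a tl ih =>
    intro e1 e2 h
    rw [List.filterMap_cons] at h
    cases hfa : f a with
    | none =>
      rw [hfa] at h
      obtain ⟨p, q, b, c, hpq, hb, hfb, hc, hfc⟩ := ih e1 e2 h
      exact ⟨p + 1, q + 1, b, c, by omega, hb, hfb, hc, hfc⟩
    | some v =>
      rw [hfa] at h
      have h' : v :: tl.filterMap f = [e1, e2] := h
      injection h' with h1 h2
      obtain ⟨p, b, hb, hfb⟩ := fm_head f tl e2 [] h2
      exact ⟨0, p + 1, a, b, Nat.succ_pos p, rfl, h1 ▸ hfa, hb, hfb⟩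

lemma mem_thread {K m : ℕ} {clauses : Fin m → Fin 3 → Fin K × Bool}
    {σ : List (TId K × Event (PVar K m))}
    (hσ : IsInterleaving (phiThreads clauses) σ)
    {a : TId K × Event (PVar K m)} (ha : a ∈ σ) :
    a.2 ∈ phiThreads clauses a.1 := by
  rw [← hσ a.1]
  exact List.mem_filterMap.mpr ⟨a, ha, by simp⟩

lemma writeX_final {K m : ℕ} {clauses : Fin m → Fin 3 → Fin K × Bool} {t : TId K}
    (h : Event.write PVar.x 1 ∈ phiThreads clauses t) : t = TId.final := by
  cases t with
  | assign i b => simp [phiThreads] at h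
  | lit i b =>
    simp only [phiThreads, List.mem_filterMap] at h
    obtain ⟨j, -, hj⟩ := h
    split at hj <;> simp_all
  | final => rfl
  | helper i b => simp [phiThreads] at h

lemma writeV_assign {K m : ℕ} {clauses : Fin m → Fin 3 → Fin K × Bool} {t : TId K}
    {i : Fin K} {d : ℕ}
    (h : Event.write (PVar.v i) d ∈ phiThreads clauses t) :
    ∃ b, t = TId.assign i b ∧ d = bval b := by
  cases t with
  | assign i' b =>
    simp only [phiThreads, List.mem_singleton, Event.write.injEq, PVar.v.injEq] at h
    exact ⟨b, by rw [h.1], h.2⟩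
  | lit i' b =>
    simp only [phiThreads, List.mem_filterMap] at h
    obtain ⟨j, -, hj⟩ := h
    split at hj <;> simp_all
  | final => simp [phiThreads] at h
  | helper i' b => simp [phiThreads] at h

lemma mem_threadPositions {K m : ℕ} {σ : List (TId K × Event (PVar K m))}
    {p : ℕ} {a : TId K × Event (PVar K m)} (h : σ[p]? = some a) :
    p ∈ threadPositions σ a.1 := by
  have hlt : p < σ.length := (List.getElem?_eq_some_iff.mp h).1
  refine List.mem_filter.mpr ⟨List.mem_range.mpr hlt, ?_⟩
  simp only [decide_eq_true_eq, h, Option.map_some]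

/-- in any SC interleaving of `P_φ` with 0 preemptions, for each
variable `x_i` at most one of the assignment threads `S_i^0`, `S_i^1` appears
before the final thread `S_f`. -/
theorem stmt9 (K m : ℕ) (clauses : Fin m → Fin 3 → Fin K × Bool)
    (σ : List (TId K × Event (PVar K m)))
    (hσ : IsInterleaving (phiThreads clauses) σ)
    (hsc : SC (σ.map Prod.snd))
    (h0 : numPreemptions σ = 0) (i : Fin K) :
    ¬ (ThreadBefore σ (TId.assign i false) TId.final ∧
       ThreadBefore σ (TId.assign i true) TId.final) := by
  rintro ⟨hbf, hbt⟩
  have key : ∀ b : Bool, ∃ qw rb qx : ℕ,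
      (σ.map Prod.snd)[qw]? = some (Event.write (PVar.v i) (bval b)) ∧
      qw ∈ threadPositions σ (TId.assign i b) ∧
      qx ∈ threadPositions σ TId.final ∧ qx < rb ∧ qw < rb ∧
      (∀ r, qw < r → r < rb → ∀ d', d' ≠ bval b →
        (σ.map Prod.snd)[r]? ≠ some (Event.write (PVar.v i) d')) := by
    intro b
    have hb := hσ (TId.helper i b)
    rw [show phiThreads clauses (TId.helper i b) =
        [Event.read PVar.x 1, Event.read (PVar.v i) (bval b)] from rfl] at hb
    obtain ⟨hpos, rpos, a1, a2, hlt, ha1, hfa1, ha2, hfa2⟩ := fm_pair _ σ _ _ hb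
    have ha1' : a1.2 = Event.read PVar.x 1 := by
      by_cases hc : a1.1 = TId.helper i b <;> simp [hc] at hfa1
      exact hfa1
    have ha2' : a2.2 = Event.read (PVar.v i) (bval b) := by
      by_cases hc : a2.1 = TId.helper i b <;> simp [hc] at hfa2
      exact hfa2
    -- SC on the helper's read of x at hpos
    have hrx : (σ.map Prod.snd)[hpos]? = some (Event.read PVar.x 1) := by
      rw [List.getElem?_map, ha1]; simp [ha1']
    obtain ⟨qx, hqx_lt, hqx, -⟩ := hsc hpos PVar.x 1 hrx
    rw [List.getElem?_map] at hqx
    obtain ⟨ax, hax, hax'⟩ : ∃ ax, σ[qx]? = some ax ∧ ax.2 = Event.write PVar.x 1 := by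
      cases hgx : σ[qx]? with
      | none => rw [hgx] at hqx; simp at hqx
      | some ax => rw [hgx] at hqx; exact ⟨ax, rfl, by simpa using hqx⟩
    have hax_final : ax.1 = TId.final :=
      writeX_final (by rw [← hax']; exact mem_thread hσ (List.mem_of_getElem? hax))
    have hqx_final : qx ∈ threadPositions σ TId.final := by
      have := mem_threadPositions hax; rwa [hax_final] at this
    -- SC on the helper's read of v i at rpos
    have hrv : (σ.map Prod.snd)[rpos]? = some (Event.read (PVar.v i) (bval b)) := by
      rw [List.getElem?_map, ha2]; simp [ha2']
    obtain ⟨qw, hqw_lt, hqw, hno⟩ := hsc rpos (PVar.v i) (bval b) hrv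
    have hqwmap := hqw
    rw [List.getElem?_map] at hqw
    obtain ⟨aw, haw, haw'⟩ : ∃ aw, σ[qw]? = some aw ∧
        aw.2 = Event.write (PVar.v i) (bval b) := by
      cases hgw : σ[qw]? with
      | none => rw [hgw] at hqw; simp at hqw
      | some aw => rw [hgw] at hqw; exact ⟨aw, rfl, by simpa using hqw⟩
    obtain ⟨b', hb', hbv⟩ :=
      writeV_assign (clauses := clauses) (haw' ▸ mem_thread hσ (List.mem_of_getElem? haw))
    have hb'b : b' = b := by cases b <;> cases b' <;> simp [bval] at hbv ⊢
    have hqw_assign : qw ∈ threadPositions σ (TId.assign i b) := by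
      have := mem_threadPositions haw; rwa [hb', hb'b] at this
    exact ⟨qw, rpos, qx, hqwmap, hqw_assign, hqx_final, Nat.lt_trans hqx_lt hlt,
      hqw_lt, hno⟩
  obtain ⟨qf, rf, qxf, hmapf, hposf, hxf, hxf_lt, hqf_lt, hnof⟩ := key false
  obtain ⟨qt, rt, qxt, hmapt, hpost, hxt, hxt_lt, hqt_lt, hnot⟩ := key true
  have h1 : qf < rt := Nat.lt_trans (hbf qf hposf qxt hxt) hxt_lt
  have h2 : qt < rf := Nat.lt_trans (hbt qt hpost qxf hxf) hxf_lt
  rcases Nat.lt_trichotomy qf qt with h | h | h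
  · exact hnof qt h h2 (bval true) (by simp [bval]) hmapt
  · rw [h, hmapt] at hmapf
    simp [bval] at hmapf
  · exact hnot qf h h1 (bval false) (by simp [bval]) hmapf
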